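/- In the setting of the random walk in the quadrant with kernel data (μ, μ_1, μ_2) satisfying (A1)–(A3), the function x ↦ φ_1(x, Y_1(x)) is strictly convex on [x*_P, x**_P], and if x** < x**_P then: (a) φ_1(x**, Y_1(x**)) = 1; (b) φ_1(x, Y_1(x)) < 1 for all x ∈ (x*, x**); (c) (d/dx) φ_1(x, Y_1(x)) evaluated at x = x** is strictly positive, so x** is a simple zero of x ↦ 1 − φ_1(x, Y_1(x)). -/

import Mathlib

/-- `n`-step transition function of the (sub)Markov chain with one-step kernel `p`. -/
noncomputable def iterK {S : Type*} [DecidableEq S] (p : S → S → ℝ) : ℕ → S → S → ℝ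
  | 0 => fun j k => if j = k then 1 else 0
  | n + 1 => fun j k => ∑' l, iterK p n j l * p l k

/-- One-step kernel of the homogeneous random walk on `ℤ²` with jump law `μ`. -/
noncomputable def homK (μ : ℤ × ℤ → ℝ) : ℤ × ℤ → ℤ × ℤ → ℝ := fun j k => μ (k - j)

/-- Generating function `∑_k ν(k) x^{k₁} y^{k₂}` of a jump measure on `ℤ²`. -/
noncomputable def genG (ν : ℤ × ℤ → ℝ) (x y : ℝ) : ℝ :=
  ∑' k : ℤ × ℤ, ν k * x ^ k.1 * y ^ k.2

open scoped ENNReal Topology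
open Set Filter

namespace PhiAux

noncomputable def conv (A B : ℤ → ℝ≥0∞) : ℤ → ℝ≥0∞ := fun j => ∑' i : ℤ, A i * B (j - i)

noncomputable def cpow (A : ℤ → ℝ≥0∞) : ℕ → ℤ → ℝ≥0∞
  | 0 => fun j => if j = 0 then 1 else 0
  | n + 1 => conv A (cpow A n)

noncomputable def ep (x : ℝ) (j : ℤ) : ℝ≥0∞ := ENNReal.ofReal (x ^ j)

noncomputable def E (A : ℤ → ℝ≥0∞) (x : ℝ) : ℝ≥0∞ := ∑' j : ℤ, A j * ep x j

noncomputable def Phi (ν : ℤ × ℤ → ℝ) (e : ℤ) (A : ℤ → ℝ≥0∞) : ℤ → ℝ≥0∞ :=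
  fun j => ∑' k : ℤ × ℤ, ENNReal.ofReal (ν k) * cpow A (k.2 + e).toNat (j - k.1)

/-- Monotone convergence for `tsum` in `ℝ≥0∞`. -/
lemma tsum_iSup_mono {ι : Type*} {f : ℕ → ι → ℝ≥0∞} (h : Monotone f) :
    ∑' i, ⨆ n, f n i = ⨆ n, ∑' i, f n i := by
  refine le_antisymm ?_ (iSup_le fun n => ENNReal.tsum_le_tsum fun i => le_iSup (fun m => f m i) n)
  rw [ENNReal.tsum_eq_iSup_sum]
  refine iSup_le fun s => ?_
  rw [ENNReal.finsetSum_iSup_of_monotone (fun i _ _ hnm => h hnm i)]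
  exact iSup_mono fun n => ENNReal.sum_le_tsum s

lemma iSup_mul_iSup_mono {a b : ℕ → ℝ≥0∞} (ha : Monotone a) (hb : Monotone b) :
    (⨆ n, a n) * (⨆ n, b n) = ⨆ n, a n * b n := by
  refine le_antisymm ?_ ?_
  · rw [ENNReal.iSup_mul]
    refine iSup_le fun m => ?_
    rw [ENNReal.mul_iSup]
    refine iSup_le fun k => ?_
    exact le_iSup_of_le (max m k) (mul_le_mul' (ha (le_max_left m k)) (hb (le_max_right m k)))
  · exact iSup_le fun n => mul_le_mul' (le_iSup a n) (le_iSup b n)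

lemma ep_pos {x : ℝ} (hx : 0 < x) (j : ℤ) : 0 < ep x j :=
  ENNReal.ofReal_pos.2 (zpow_pos hx j)

lemma ep_ne_top (x : ℝ) (j : ℤ) : ep x j ≠ ∞ := ENNReal.ofReal_ne_top

lemma ep_add {x : ℝ} (hx : 0 < x) (i j : ℤ) : ep x (i + j) = ep x i * ep x j := by
  unfold ep
  rw [zpow_add₀ hx.ne', ENNReal.ofReal_mul (zpow_nonneg hx.le _)]

lemma E_conv {A B : ℤ → ℝ≥0∞} {x : ℝ} (hx : 0 < x) : E (conv A B) x = E A x * E B x := by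
  unfold E conv
  calc ∑' j : ℤ, (∑' i : ℤ, A i * B (j - i)) * ep x j
      = ∑' j : ℤ, ∑' i : ℤ, A i * B (j - i) * ep x j := by
        congr 1; funext j; exact ENNReal.tsum_mul_right.symm
    _ = ∑' i : ℤ, ∑' j : ℤ, A i * B (j - i) * ep x j := ENNReal.tsum_comm
    _ = ∑' i : ℤ, ∑' w : ℤ, A i * B w * ep x (i + w) := by
        congr 1; funext i
        exact ((Equiv.addLeft i).tsum_eq fun j => A i * B (j - i) * ep x j).symm.trans
          (by congr 1; funext w; simp [Equiv.addLeft, add_sub_cancel_left])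
    _ = ∑' i : ℤ, A i * ep x i * ∑' w : ℤ, B w * ep x w := by
        congr 1; funext i
        rw [← ENNReal.tsum_mul_left]
        congr 1; funext w
        rw [ep_add hx]; ring
    _ = (∑' i : ℤ, A i * ep x i) * ∑' w : ℤ, B w * ep x w := ENNReal.tsum_mul_right

lemma E_delta {x : ℝ} : E (fun j => if j = 0 then 1 else 0) x = ENNReal.ofReal (x ^ (0:ℤ)) := by
  unfold E
  rw [tsum_eq_single 0 (by intro b hb; simp [hb])]
  simp [ep]

lemma E_cpow {A : ℤ → ℝ≥0∞} {x : ℝ} (hx : 0 < x) (m : ℕ) : E (cpow A m) x = (E A x) ^ m := by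
  induction m with
  | zero => simpa [cpow] using E_delta
  | succ n ih => rw [cpow, E_conv hx, ih, pow_succ]; ring

lemma conv_mono {A A' B B' : ℤ → ℝ≥0∞} (hA : A ≤ A') (hB : B ≤ B') : conv A B ≤ conv A' B' :=
  fun j => ENNReal.tsum_le_tsum fun i => mul_le_mul' (hA i) (hB _)

lemma cpow_mono {A A' : ℤ → ℝ≥0∞} (hA : A ≤ A') (m : ℕ) : cpow A m ≤ cpow A' m := by
  induction m with
  | zero => exact le_refl _
  | succ n ih => exact conv_mono hA ih

lemma Phi_mono {ν : ℤ × ℤ → ℝ} {e : ℤ} {A A' : ℤ → ℝ≥0∞} (hA : A ≤ A') :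
    Phi ν e A ≤ Phi ν e A' :=
  fun j => ENNReal.tsum_le_tsum fun k => mul_le_mul' (le_refl _) (cpow_mono hA _ _)

lemma E_mono {A A' : ℤ → ℝ≥0∞} (hA : A ≤ A') (x : ℝ) : E A x ≤ E A' x :=
  ENNReal.tsum_le_tsum fun j => mul_le_mul' (hA j) (le_refl _)

lemma conv_iSup {F G : ℕ → ℤ → ℝ≥0∞} (hF : Monotone F) (hG : Monotone G) (j : ℤ) :
    conv (fun i => ⨆ n, F n i) (fun i => ⨆ n, G n i) j = ⨆ n, conv (F n) (G n) j := by
  unfold conv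
  rw [← tsum_iSup_mono (f := fun n i => F n i * G n (j - i))
    (fun n m hnm i => mul_le_mul' (hF hnm i) (hG hnm _))]
  congr 1; funext i
  exact iSup_mul_iSup_mono (fun n m hnm => hF hnm i) (fun n m hnm => hG hnm _)

lemma cpow_iSup {F : ℕ → ℤ → ℝ≥0∞} (hF : Monotone F) (m : ℕ) (j : ℤ) :
    cpow (fun i => ⨆ n, F n i) m j = ⨆ n, cpow (F n) m j := by
  induction m generalizing j with
  | zero => simp [cpow]
  | succ p ih =>
      have hmono : Monotone fun n => cpow (F n) p := fun n m hnm => cpow_mono (hF hnm) p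
      show conv (fun i => ⨆ n, F n i) (cpow (fun i => ⨆ n, F n i) p) j = _
      rw [show cpow (fun i => ⨆ n, F n i) p = fun i => ⨆ n, cpow (F n) p i from
        funext fun i => ih i, conv_iSup hF hmono j]
      exact iSup_congr fun n => rfl

lemma Phi_iSup {ν : ℤ × ℤ → ℝ} {e : ℤ} {F : ℕ → ℤ → ℝ≥0∞} (hF : Monotone F) (j : ℤ) :
    Phi ν e (fun i => ⨆ n, F n i) j = ⨆ n, Phi ν e (F n) j := by
  unfold Phi
  rw [← tsum_iSup_mono (f := fun n k => ENNReal.ofReal (ν k) * cpow (F n) (k.2 + e).toNat (j - k.1))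
    (fun n m hnm k => mul_le_mul' (le_refl _) (cpow_mono (hF hnm) _ _))]
  congr 1; funext k
  rw [cpow_iSup hF, ENNReal.mul_iSup]

lemma E_iSup {F : ℕ → ℤ → ℝ≥0∞} (hF : Monotone F) (x : ℝ) :
    E (fun i => ⨆ n, F n i) x = ⨆ n, E (F n) x := by
  unfold E
  rw [← tsum_iSup_mono (f := fun n j => F n j * ep x j)
    (fun n m hnm j => mul_le_mul' (hF hnm j) (le_refl _))]
  congr 1; funext j
  rw [ENNReal.iSup_mul]

lemma E_Phi {ν : ℤ × ℤ → ℝ} {e : ℤ} {A : ℤ → ℝ≥0∞} {x : ℝ} (hx : 0 < x) :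
    E (Phi ν e A) x = ∑' k : ℤ × ℤ, ENNReal.ofReal (ν k) * ep x k.1 * (E A x) ^ (k.2 + e).toNat := by
  unfold E Phi
  calc ∑' j : ℤ, (∑' k : ℤ × ℤ, ENNReal.ofReal (ν k) * cpow A (k.2 + e).toNat (j - k.1)) * ep x j
      = ∑' j : ℤ, ∑' k : ℤ × ℤ, ENNReal.ofReal (ν k) * cpow A (k.2 + e).toNat (j - k.1) * ep x j := by
        congr 1; funext j; exact ENNReal.tsum_mul_right.symm
    _ = ∑' k : ℤ × ℤ, ∑' j : ℤ, ENNReal.ofReal (ν k) * cpow A (k.2 + e).toNat (j - k.1) * ep x j :=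
        ENNReal.tsum_comm
    _ = ∑' k : ℤ × ℤ, ENNReal.ofReal (ν k) * ep x k.1 * (E A x) ^ (k.2 + e).toNat := by
        congr 1; funext k
        calc ∑' j : ℤ, ENNReal.ofReal (ν k) * cpow A (k.2 + e).toNat (j - k.1) * ep x j
            = ∑' w : ℤ, ENNReal.ofReal (ν k) * cpow A (k.2 + e).toNat w * ep x (k.1 + w) := by
              refine ((Equiv.addLeft k.1).tsum_eq _).symm.trans ?_
              congr 1; funext w; simp [Equiv.addLeft, add_sub_cancel_left]
          _ = ENNReal.ofReal (ν k) * ep x k.1 * ∑' w : ℤ, cpow A (k.2 + e).toNat w * ep x w := by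
              rw [← ENNReal.tsum_mul_left]
              congr 1; funext w
              rw [ep_add hx]; ring
          _ = ENNReal.ofReal (ν k) * ep x k.1 * (E A x) ^ (k.2 + e).toNat := by
              rw [show (∑' w : ℤ, cpow A (k.2 + e).toNat w * ep x w)
                = E (cpow A (k.2 + e).toNat) x from rfl, E_cpow hx]


/-! ### The minimal-solution iteration -/

noncomputable def AN (ν : ℤ × ℤ → ℝ) (n : ℕ) : ℤ → ℝ≥0∞ := (Phi ν 1)^[n] (fun _ => 0)

noncomputable def Ainf (ν : ℤ × ℤ → ℝ) : ℤ → ℝ≥0∞ := fun j => ⨆ n, AN ν n j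

lemma AN_mono (ν : ℤ × ℤ → ℝ) : Monotone (AN ν) := by
  refine monotone_nat_of_le_succ ?_
  intro n
  induction n with
  | zero => intro j; simp [AN]
  | succ p ih =>
      have : AN ν (p+1) = Phi ν 1 (AN ν p) := Function.iterate_succ_apply' _ _ _
      have h2 : AN ν (p+2) = Phi ν 1 (AN ν (p+1)) := Function.iterate_succ_apply' _ _ _
      rw [this, h2]
      exact Phi_mono ih

lemma AN_succ (ν : ℤ × ℤ → ℝ) (n : ℕ) : AN ν (n+1) = Phi ν 1 (AN ν n) :=
  Function.iterate_succ_apply' _ _ _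

lemma Ainf_fixed (ν : ℤ × ℤ → ℝ) : Phi ν 1 (Ainf ν) = Ainf ν := by
  funext j
  rw [show Ainf ν = fun i => ⨆ n, AN ν n i from rfl, Phi_iSup (AN_mono ν)]
  refine le_antisymm (iSup_le fun n => ?_) (iSup_le fun n => ?_)
  · rw [← AN_succ]; exact le_iSup (fun m => AN ν m j) (n+1)
  · calc AN ν n j ≤ AN ν (n+1) j := AN_mono ν (Nat.le_succ n) j
      _ = Phi ν 1 (AN ν n) j := by rw [AN_succ]
      _ ≤ ⨆ m, Phi ν 1 (AN ν m) j := le_iSup (fun m => Phi ν 1 (AN ν m) j) n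

lemma E_Ainf (ν : ℤ × ℤ → ℝ) {x : ℝ} : E (Ainf ν) x = ⨆ n, E (AN ν n) x :=
  E_iSup (fun n m hnm j => AN_mono ν hnm j) x

/-! ### Lower bounds for convolution powers -/

lemma cpow_one (A : ℤ → ℝ≥0∞) (j : ℤ) : cpow A 1 j = A j := by
  show conv A (cpow A 0) j = A j
  unfold conv cpow
  rw [tsum_eq_single j ?_]
  · simp
  · intro b hb
    have : j - b ≠ 0 := sub_ne_zero.2 (Ne.symm hb)
    simp [this]

lemma le_cpow_succ (A : ℤ → ℝ≥0∞) (m : ℕ) (p q : ℤ) :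
    A p * cpow A m q ≤ cpow A (m+1) (p + q) := by
  show _ ≤ conv A (cpow A m) (p + q)
  unfold conv
  have := ENNReal.le_tsum (f := fun i : ℤ => A i * cpow A m (p + q - i)) p
  simpa using this

lemma pow_le_cpow (A : ℤ → ℝ≥0∞) (i : ℤ) (m : ℕ) : (A i) ^ m ≤ cpow A m (m * i) := by
  induction m with
  | zero => simp [cpow]
  | succ p ih =>
      calc (A i)^(p+1) = A i * (A i)^p := by ring
        _ ≤ A i * cpow A p (p * i) := mul_le_mul' (le_refl _) ih
        _ ≤ cpow A (p+1) (i + p * i) := le_cpow_succ A p i (p * i)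
        _ = cpow A (p+1) ((p+1 : ℕ) * i) := by congr 1; push_cast; ring

/-! ### Bridges between `ℝ≥0∞` sums and real sums -/

lemma bridge {ν : ℤ × ℤ → ℝ} (hν : ∀ k, 0 ≤ ν k) (e : ℤ)
    (hsupp' : ∀ k, ν k ≠ 0 → 0 ≤ k.2 + e) {x y : ℝ} (hx : 0 < x) (hy : 0 < y)
    (hsum : Summable fun k : ℤ × ℤ => ν k * x ^ k.1 * y ^ (k.2 + e)) :
    ∑' k : ℤ × ℤ, ENNReal.ofReal (ν k) * ep x k.1 * (ENNReal.ofReal y) ^ (k.2 + e).toNat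
      = ENNReal.ofReal (∑' k : ℤ × ℤ, ν k * x ^ k.1 * y ^ (k.2 + e)) := by
  rw [ENNReal.ofReal_tsum_of_nonneg
    (fun k => mul_nonneg (mul_nonneg (hν k) (zpow_nonneg hx.le _)) (zpow_nonneg hy.le _)) hsum]
  congr 1; funext k
  by_cases hk : ν k = 0
  · simp [hk]
  · have hke := hsupp' k hk
    have : y ^ (k.2 + e) = y ^ (k.2 + e).toNat := by
      rw [← zpow_natCast, Int.toNat_of_nonneg hke]
    rw [this, ENNReal.ofReal_mul (mul_nonneg (hν k) (zpow_nonneg hx.le _)),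
      ENNReal.ofReal_mul (hν k), ENNReal.ofReal_pow hy.le]
    rfl

lemma shift_eq {ν : ℤ × ℤ → ℝ} {x y : ℝ} (hy : y ≠ 0) :
    (fun k : ℤ × ℤ => ν k * x ^ k.1 * y ^ (k.2 + 1))
      = fun k : ℤ × ℤ => ν k * x ^ k.1 * y ^ k.2 * y := by
  funext k
  rw [zpow_add_one₀ hy]
  ring

lemma shift_summable {ν : ℤ × ℤ → ℝ} {x y : ℝ} (hy : y ≠ 0)
    (h : Summable fun k : ℤ × ℤ => ν k * x ^ k.1 * y ^ k.2) :
    Summable fun k : ℤ × ℤ => ν k * x ^ k.1 * y ^ (k.2 + 1) := by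
  rw [shift_eq hy]
  exact h.mul_right y

lemma shift_tsum {ν : ℤ × ℤ → ℝ} {x y : ℝ} (hy : y ≠ 0) :
    ∑' k : ℤ × ℤ, ν k * x ^ k.1 * y ^ (k.2 + 1) = genG ν x y * y := by
  rw [shift_eq hy, genG]
  exact tsum_mul_right


/-! ### Reachability invariants -/

lemma iterK_nonneg {μ : ℤ × ℤ → ℝ} (hnn : ∀ k, 0 ≤ μ k) :
    ∀ n j k, 0 ≤ iterK (homK μ) n j k := by
  intro n
  induction n with
  | zero => intro j k; unfold iterK; positivity
  | succ p ih =>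
      intro j k
      unfold iterK
      exact tsum_nonneg fun l => mul_nonneg (ih j l) (hnn _)

lemma INV {μ : ℤ × ℤ → ℝ} (hnn : ∀ k, 0 ≤ μ k) (S : Set (ℤ × ℤ))
    (hS : ∀ p ∈ S, ∀ q : ℤ × ℤ, 0 < μ (q - p) → q ∈ S) :
    ∀ n, ∀ j ∈ S, ∀ k, 0 < iterK (homK μ) n j k → k ∈ S := by
  intro n
  induction n with
  | zero =>
      intro j hj k hk
      unfold iterK at hk
      by_cases h : j = k
      · exact h ▸ hj
      · simp [h] at hk
  | succ p ih =>
      intro j hj k hk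
      unfold iterK at hk
      have hex : ∃ l, iterK (homK μ) p j l * homK μ l k ≠ 0 := by
        by_contra hall
        push_neg at hall
        rw [tsum_congr (fun l => hall l), tsum_zero] at hk
        exact lt_irrefl 0 hk
      obtain ⟨l, hl⟩ := hex
      have h1 : iterK (homK μ) p j l ≠ 0 := fun h => hl (by rw [h, zero_mul])
      have h2 : homK μ l k ≠ 0 := fun h => hl (by rw [h, mul_zero])
      have h1' : 0 < iterK (homK μ) p j l := lt_of_le_of_ne (iterK_nonneg hnn p j l) (Ne.symm h1)
      have h2' : 0 < μ (k - l) := lt_of_le_of_ne (hnn _) (Ne.symm h2)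
      exact hS l (ih j hj l h1') k h2'

lemma exists_down {μ : ℤ × ℤ → ℝ} (hnn : ∀ k, 0 ≤ μ k)
    (hsupp : ∀ k : ℤ × ℤ, k.1 < -1 ∨ k.2 < -1 → μ k = 0)
    (hirr : ∀ j k : ℤ × ℤ, ∃ n, 0 < iterK (homK μ) n j k) :
    ∃ k : ℤ × ℤ, 0 < μ k ∧ k.2 = -1 := by
  by_contra h
  push_neg at h
  have hall : ∀ d : ℤ × ℤ, 0 < μ d → 0 ≤ d.2 := by
    intro d hd
    by_contra hd2
    push_neg at hd2
    have hne : d.2 ≠ -1 := h d hd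
    have h1 : d.2 < -1 := by omega
    exact absurd (hsupp d (Or.inr h1)) (ne_of_gt hd)
  obtain ⟨n, hn⟩ := hirr (0, 0) (0, -1)
  have := INV hnn {p : ℤ × ℤ | 0 ≤ p.2}
    (fun p hp q hq => by
      have := hall _ hq
      have hsub : (q - p).2 = q.2 - p.2 := rfl
      simp only [Set.mem_setOf_eq] at hp ⊢
      omega)
    n (0, 0) (by simp) (0, -1) hn
  simp at this

lemma exists_up {μ : ℤ × ℤ → ℝ} (hnn : ∀ k, 0 ≤ μ k)
    (hirr : ∀ j k : ℤ × ℤ, ∃ n, 0 < iterK (homK μ) n j k)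
    (hall : ∀ d : ℤ × ℤ, 0 < μ d → d.2 ≤ 0) : False := by
  obtain ⟨n, hn⟩ := hirr (0, 0) (0, 1)
  have := INV hnn {p : ℤ × ℤ | p.2 ≤ 0}
    (fun p hp q hq => by
      have := hall _ hq
      have hsub : (q - p).2 = q.2 - p.2 := rfl
      simp only [Set.mem_setOf_eq] at hp ⊢
      omega)
    n (0, 0) (by simp) (0, 1) hn
  simp at this

lemma line_contra {μ : ℤ × ℤ → ℝ} (hnn : ∀ k, 0 ≤ μ k)
    (hirr : ∀ j k : ℤ × ℤ, ∃ n, 0 < iterK (homK μ) n j k)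
    (i : ℤ) (hall : ∀ d : ℤ × ℤ, 0 < μ d → d.1 = - d.2 * i) : False := by
  obtain ⟨n, hn⟩ := hirr (0, 0) (1, 0)
  have := INV hnn {p : ℤ × ℤ | p.1 = - p.2 * i}
    (fun p hp q hq => by
      have h1 := hall _ hq
      simp only [Set.mem_setOf_eq] at hp ⊢
      have : (q - p).1 = q.1 - p.1 := rfl
      have h2 : (q - p).2 = q.2 - p.2 := rfl
      rw [this, h2] at h1
      nlinarith [h1, hp])
    n (0, 0) (by simp) (1, 0) hn
  simp only [Set.mem_setOf_eq] at this
  norm_num at this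


/-! ### Identification of the minimal solution with `Y₁` -/

lemma zpow_le_zpow_nn {y y' : ℝ} (h0 : 0 ≤ y') (h : y' ≤ y) {n : ℤ} (hn : 0 ≤ n) :
    y' ^ n ≤ y ^ n := by
  lift n to ℕ using hn
  rw [zpow_natCast, zpow_natCast]
  exact pow_le_pow_left₀ h0 h _

lemma key1 {μ : ℤ × ℤ → ℝ} (hnn : ∀ k, 0 ≤ μ k)
    (hsupp : ∀ k : ℤ × ℤ, k.1 < -1 ∨ k.2 < -1 → μ k = 0)
    {x y : ℝ} (hx : 0 < x) (hy : 0 < y)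
    (hsum : Summable fun k : ℤ × ℤ => μ k * x ^ k.1 * y ^ k.2)
    (hle : genG μ x y ≤ 1) : E (Ainf μ) x ≤ ENNReal.ofReal y := by
  rw [E_Ainf]
  refine iSup_le fun n => ?_
  induction n with
  | zero => simp [AN, E]
  | succ p ih =>
      rw [AN_succ, E_Phi hx]
      have hsupp' : ∀ k : ℤ × ℤ, μ k ≠ 0 → 0 ≤ k.2 + 1 := by
        intro k hk
        by_contra hc
        exact hk (hsupp k (Or.inr (by omega)))
      calc ∑' k : ℤ × ℤ, ENNReal.ofReal (μ k) * ep x k.1 * (E (AN μ p) x) ^ (k.2 + 1).toNat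
          ≤ ∑' k : ℤ × ℤ, ENNReal.ofReal (μ k) * ep x k.1 * (ENNReal.ofReal y) ^ (k.2 + 1).toNat :=
            ENNReal.tsum_le_tsum fun k => mul_le_mul' (le_refl _) (pow_le_pow_left' ih _)
        _ = ENNReal.ofReal (∑' k : ℤ × ℤ, μ k * x ^ k.1 * y ^ (k.2 + 1)) :=
            bridge hnn 1 hsupp' hx hy (shift_summable hy.ne' hsum)
        _ = ENNReal.ofReal (genG μ x y * y) := by rw [shift_tsum hy.ne']
        _ ≤ ENNReal.ofReal y :=
            ENNReal.ofReal_le_ofReal (by nlinarith)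

lemma key2 {μ : ℤ × ℤ → ℝ} (hnn : ∀ k, 0 ≤ μ k)
    (hsupp : ∀ k : ℤ × ℤ, k.1 < -1 ∨ k.2 < -1 → μ k = 0)
    (hirr : ∀ j k : ℤ × ℤ, ∃ n, 0 < iterK (homK μ) n j k)
    {x Y : ℝ} (hx : 0 < x) (hY : 0 < Y)
    (hsum : Summable fun k : ℤ × ℤ => μ k * x ^ k.1 * Y ^ k.2)
    (hgen : genG μ x Y = 1)
    (hmin : ∀ y : ℝ, 0 < y → genG μ x y = 1 → Y ≤ y) :
    E (Ainf μ) x = ENNReal.ofReal Y := by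
  have hub : E (Ainf μ) x ≤ ENNReal.ofReal Y := key1 hnn hsupp hx hY hsum (le_of_eq hgen)
  obtain ⟨k₀, hk₀, hk₀2⟩ := exists_down hnn hsupp hirr
  -- positivity
  have h0 : E (AN μ 0) x = 0 := by simp [AN, E]
  have hpos1 : 0 < E (AN μ 1) x := by
    rw [show (1 : ℕ) = 0 + 1 from rfl, AN_succ, E_Phi hx, h0]
    refine lt_of_lt_of_le ?_ (ENNReal.le_tsum k₀)
    have : (k₀.2 + 1).toNat = 0 := by omega
    rw [this, pow_zero, mul_one]
    exact ENNReal.mul_pos (by simp [ENNReal.ofReal_pos, hk₀]) (ep_pos hx _).ne'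
  have hposL : 0 < E (Ainf μ) x := by
    refine lt_of_lt_of_le hpos1 ?_
    rw [E_Ainf]
    exact le_iSup (fun n => E (AN μ n) x) 1
  set L := E (Ainf μ) x with hL
  have hLt : L ≠ ⊤ := by
    intro h
    rw [h] at hub
    exact (lt_irrefl _ (lt_of_le_of_lt hub (ENNReal.ofReal_lt_top))).elim
  set ℓ := L.toReal with hℓ
  have hℓpos : 0 < ℓ := ENNReal.toReal_pos hposL.ne' hLt
  have hℓle : ℓ ≤ Y := by
    have := ENNReal.toReal_mono ENNReal.ofReal_ne_top hub
    rwa [ENNReal.toReal_ofReal hY.le] at this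
  -- fixed point equation
  have hfix : L = ∑' k : ℤ × ℤ, ENNReal.ofReal (μ k) * ep x k.1 * L ^ (k.2 + 1).toNat := by
    conv_lhs => rw [hL, ← Ainf_fixed μ, E_Phi hx]
  have hsupp' : ∀ k : ℤ × ℤ, μ k ≠ 0 → 0 ≤ k.2 + 1 := by
    intro k hk
    by_contra hc
    exact hk (hsupp k (Or.inr (by omega)))
  have hsumY : Summable fun k : ℤ × ℤ => μ k * x ^ k.1 * Y ^ (k.2 + 1) :=
    shift_summable hY.ne' hsum
  have hsumℓ : Summable fun k : ℤ × ℤ => μ k * x ^ k.1 * ℓ ^ (k.2 + 1) := by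
    refine Summable.of_nonneg_of_le
      (fun k => mul_nonneg (mul_nonneg (hnn k) (zpow_nonneg hx.le _)) (zpow_nonneg hℓpos.le _))
      (fun k => ?_) hsumY
    by_cases hk : μ k = 0
    · simp [hk]
    · exact mul_le_mul_of_nonneg_left (zpow_le_zpow_nn hℓpos.le hℓle (hsupp' k hk))
        (mul_nonneg (hnn k) (zpow_nonneg hx.le _))
  have hLofReal : L = ENNReal.ofReal ℓ := (ENNReal.ofReal_toReal hLt).symm
  have hbridge : L = ENNReal.ofReal (∑' k : ℤ × ℤ, μ k * x ^ k.1 * ℓ ^ (k.2 + 1)) := by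
    conv_lhs => rw [hfix]
    calc ∑' k : ℤ × ℤ, ENNReal.ofReal (μ k) * ep x k.1 * L ^ (k.2 + 1).toNat
        = ∑' k : ℤ × ℤ, ENNReal.ofReal (μ k) * ep x k.1 * (ENNReal.ofReal ℓ) ^ (k.2 + 1).toNat := by
          rw [← hLofReal]
      _ = ENNReal.ofReal (∑' k : ℤ × ℤ, μ k * x ^ k.1 * ℓ ^ (k.2 + 1)) :=
          bridge hnn 1 hsupp' hx hℓpos hsumℓ
  have hreal : ℓ = genG μ x ℓ * ℓ := by
    have h1 : ENNReal.ofReal ℓ = ENNReal.ofReal (genG μ x ℓ * ℓ) := by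
      rw [← hLofReal, hbridge, shift_tsum hℓpos.ne']
    have h2 : 0 ≤ genG μ x ℓ * ℓ :=
      mul_nonneg (tsum_nonneg fun k =>
        mul_nonneg (mul_nonneg (hnn k) (zpow_nonneg hx.le _)) (zpow_nonneg hℓpos.le _)) hℓpos.le
    have := ENNReal.ofReal_eq_ofReal_iff hℓpos.le h2
    exact this.1 h1
  have hgenℓ : genG μ x ℓ = 1 := by
    have : genG μ x ℓ * ℓ = 1 * ℓ := by rw [← hreal, one_mul]
    exact mul_right_cancel₀ hℓpos.ne' this
  have hYℓ : Y ≤ ℓ := hmin ℓ hℓpos hgenℓ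
  have : ℓ = Y := le_antisymm hℓle hYℓ
  rw [hLofReal, this]

lemma key3 {μ μ₁ : ℤ × ℤ → ℝ} (h₁nn : ∀ k, 0 ≤ μ₁ k)
    (h₁supp : ∀ k : ℤ × ℤ, k.1 < -1 ∨ k.2 < 0 → μ₁ k = 0)
    {x Y : ℝ} (hx : 0 < x) (hY : 0 < Y)
    (hEA : E (Ainf μ) x = ENNReal.ofReal Y)
    (hsum1 : Summable fun k : ℤ × ℤ => μ₁ k * x ^ k.1 * Y ^ k.2) :
    E (Phi μ₁ 0 (Ainf μ)) x = ENNReal.ofReal (genG μ₁ x Y) := by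
  rw [E_Phi hx, hEA]
  have hsupp' : ∀ k : ℤ × ℤ, μ₁ k ≠ 0 → 0 ≤ k.2 + 0 := by
    intro k hk
    by_contra hc
    exact hk (h₁supp k (Or.inr (by omega)))
  have hsum' : Summable fun k : ℤ × ℤ => μ₁ k * x ^ k.1 * Y ^ (k.2 + 0) := by
    simpa using hsum1
  rw [bridge h₁nn 0 hsupp' hx hY hsum']
  congr 1
  simp [genG]


/-! ### The master series lemma -/

lemma main_series {μ μ₁ : ℤ × ℤ → ℝ}
    (hnn : ∀ k, 0 ≤ μ k) (h₁nn : ∀ k, 0 ≤ μ₁ k)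
    (hsupp : ∀ k : ℤ × ℤ, k.1 < -1 ∨ k.2 < -1 → μ k = 0)
    (h₁supp : ∀ k : ℤ × ℤ, k.1 < -1 ∨ k.2 < 0 → μ₁ k = 0)
    (h₁vert : ∃ k : ℤ × ℤ, 0 < k.2 ∧ 0 < μ₁ k)
    (hirr : ∀ j k : ℤ × ℤ, ∃ n, 0 < iterK (homK μ) n j k)
    (hfin : ∃ U : Set (ℝ × ℝ), IsOpen U ∧
      {q : ℝ × ℝ | 0 < q.1 ∧ 0 < q.2 ∧ genG μ q.1 q.2 ≤ 1} ⊆ U ∧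
      ∀ q ∈ U, Summable (fun k : ℤ × ℤ => μ k * q.1 ^ k.1 * q.2 ^ k.2) ∧
        Summable (fun k : ℤ × ℤ => μ₁ k * q.1 ^ k.1 * q.2 ^ k.2))
    {xsP xssP : ℝ}
    (hproj : {x : ℝ | 0 < x ∧ ∃ y : ℝ, 0 < y ∧ genG μ x y ≤ 1} = Set.Icc xsP xssP)
    (hne : xsP ≤ xssP)
    {Y₁ : ℝ → ℝ}
    (hY₁ : ∀ x ∈ Set.Icc xsP xssP, 0 < Y₁ x ∧ genG μ x (Y₁ x) = 1 ∧
      ∀ y : ℝ, 0 < y → genG μ x y = 1 → Y₁ x ≤ y) :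
    ∃ b : ℤ → ℝ, (∀ j, 0 ≤ b j) ∧ (∃ j0 : ℤ, j0 ≠ 0 ∧ j0 ≠ 1 ∧ 0 < b j0) ∧
      ∀ x ∈ Set.Icc xsP xssP, Summable (fun j : ℤ => b j * x ^ j) ∧
        genG μ₁ x (Y₁ x) = ∑' j : ℤ, b j * x ^ j := by
  obtain ⟨U, hUo, hDU, hUsum⟩ := hfin
  have hxpos : ∀ x ∈ Set.Icc xsP xssP, 0 < x := by
    intro x hx
    rw [← hproj] at hx
    exact hx.1
  have hmemU : ∀ x ∈ Set.Icc xsP xssP, ((x, Y₁ x) : ℝ × ℝ) ∈ U := by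
    intro x hx
    exact hDU ⟨hxpos x hx, (hY₁ x hx).1, le_of_eq (hY₁ x hx).2.1⟩
  have hEA : ∀ x ∈ Set.Icc xsP xssP, E (Ainf μ) x = ENNReal.ofReal (Y₁ x) := by
    intro x hx
    exact key2 hnn hsupp hirr (hxpos x hx) (hY₁ x hx).1 (hUsum _ (hmemU x hx)).1
      (hY₁ x hx).2.1 (hY₁ x hx).2.2
  have hEB : ∀ x ∈ Set.Icc xsP xssP,
      E (Phi μ₁ 0 (Ainf μ)) x = ENNReal.ofReal (genG μ₁ x (Y₁ x)) := by
    intro x hx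
    exact key3 h₁nn h₁supp (hxpos x hx) (hY₁ x hx).1 (hEA x hx) (hUsum _ (hmemU x hx)).2
  have hxsP : xsP ∈ Set.Icc xsP xssP := ⟨le_refl _, hne⟩
  have hxsPpos : 0 < xsP := hxpos _ hxsP
  have hBfin : ∀ j, Phi μ₁ 0 (Ainf μ) j ≠ ∞ := by
    intro j hj
    have hterm : Phi μ₁ 0 (Ainf μ) j * ep xsP j = ∞ := by
      rw [hj]
      exact ENNReal.top_mul (ep_pos hxsPpos j).ne'
    have : (∞ : ℝ≥0∞) ≤ E (Phi μ₁ 0 (Ainf μ)) xsP := by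
      rw [← hterm]
      exact ENNReal.le_tsum j
    rw [hEB xsP hxsP] at this
    exact (lt_irrefl _ (lt_of_le_of_lt this ENNReal.ofReal_lt_top)).elim
  refine ⟨fun j => (Phi μ₁ 0 (Ainf μ) j).toReal, fun j => ENNReal.toReal_nonneg, ?_, ?_⟩
  · -- a positive coefficient with index outside {0, 1}
    have hbpos : ∀ j, 0 < Phi μ₁ 0 (Ainf μ) j → 0 < (Phi μ₁ 0 (Ainf μ) j).toReal :=
      fun j hj => ENNReal.toReal_pos hj.ne' (hBfin j)
    have hAfix : Phi μ 1 (Ainf μ) = Ainf μ := Ainf_fixed μ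
    have hApos : ∃ i, 0 < Ainf μ i := by
      by_contra hno
      push_neg at hno
      have hzero : ∀ i, Ainf μ i = 0 := fun i => le_antisymm (hno i) (zero_le)
      have : E (Ainf μ) xsP = 0 := by
        unfold E
        rw [tsum_congr (fun j => by rw [hzero j, zero_mul]), tsum_zero]
      rw [hEA xsP hxsP] at this
      exact absurd this (ne_of_gt (ENNReal.ofReal_pos.2 (hY₁ xsP hxsP).1))
    have hstep : ∀ k : ℤ × ℤ, 0 < μ k → ∀ i : ℤ, 0 < Ainf μ i →
        0 < Ainf μ (k.1 + (((k.2 + 1).toNat : ℤ)) * i) := by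
      intro k hk i hi
      have h1 : 0 < ENNReal.ofReal (μ k) * (Ainf μ i) ^ (k.2 + 1).toNat :=
        ENNReal.mul_pos (ENNReal.ofReal_pos.2 hk).ne' (ENNReal.pow_pos hi _).ne'
      have h2 : ENNReal.ofReal (μ k) * (Ainf μ i) ^ (k.2 + 1).toNat
          ≤ Ainf μ (k.1 + (((k.2 + 1).toNat : ℤ)) * i) := by
        calc ENNReal.ofReal (μ k) * (Ainf μ i) ^ (k.2 + 1).toNat
            ≤ ENNReal.ofReal (μ k) * cpow (Ainf μ) (k.2 + 1).toNat (((k.2 + 1).toNat : ℤ) * i) :=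
              mul_le_mul' (le_refl _) (pow_le_cpow _ _ _)
          _ ≤ Phi μ 1 (Ainf μ) (k.1 + (((k.2 + 1).toNat : ℤ)) * i) := by
              refine le_trans (le_of_eq ?_) (ENNReal.le_tsum k)
              congr 2
              ring
          _ = Ainf μ (k.1 + (((k.2 + 1).toNat : ℤ)) * i) := by rw [hAfix]
      exact lt_of_lt_of_le h1 h2
    have htwo : ∃ i₁ i₂ : ℤ, i₁ ≠ i₂ ∧ 0 < Ainf μ i₁ ∧ 0 < Ainf μ i₂ := by
      by_contra hno
      obtain ⟨i, hi⟩ := hApos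
      have huniq : ∀ j, 0 < Ainf μ j → j = i := by
        intro j hj
        by_contra hij
        exact hno ⟨j, i, hij, hj, hi⟩
      refine line_contra hnn hirr i ?_
      intro d hd
      have hd2 : -1 ≤ d.2 := by
        by_contra hc
        exact absurd (hsupp d (Or.inr (by omega))) (ne_of_gt hd)
      have hm : (((d.2 + 1).toNat : ℤ)) = d.2 + 1 := Int.toNat_of_nonneg (by omega)
      have := huniq _ (hstep d hd i hi)
      rw [hm] at this
      nlinarith [this]
    obtain ⟨i₁, i₂, hi12, hA1, hA2⟩ := htwo
    obtain ⟨kv, hkv2, hkv⟩ := h₁vert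
    set M := (kv.2 + 0).toNat with hMdef
    have hM : (M : ℤ) = kv.2 := by
      rw [hMdef]
      omega
    have hM1 : 1 ≤ M := by omega
    have hBge : ∀ w : ℤ, ENNReal.ofReal (μ₁ kv) * cpow (Ainf μ) M w
        ≤ Phi μ₁ 0 (Ainf μ) (kv.1 + w) := by
      intro w
      refine le_trans (le_of_eq ?_) (ENNReal.le_tsum kv)
      congr 2
      ring
    have hμkv : (ENNReal.ofReal (μ₁ kv)) ≠ 0 := (ENNReal.ofReal_pos.2 hkv).ne'
    obtain ⟨p, hp⟩ : ∃ p, M = p + 1 := ⟨M - 1, by omega⟩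
    by_cases hpz : p = 0
    · -- M = 1
      have hM1' : M = 1 := by omega
      have hpos1 : 0 < Phi μ₁ 0 (Ainf μ) (kv.1 + i₁) := by
        refine lt_of_lt_of_le ?_ (hBge i₁)
        rw [hM1', cpow_one]
        exact ENNReal.mul_pos hμkv hA1.ne'
      have hpos2 : 0 < Phi μ₁ 0 (Ainf μ) (kv.1 + i₂) := by
        refine lt_of_lt_of_le ?_ (hBge i₂)
        rw [hM1', cpow_one]
        exact ENNReal.mul_pos hμkv hA2.ne'
      by_cases hc1 : kv.1 + i₁ ≠ 0 ∧ kv.1 + i₁ ≠ 1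
      · exact ⟨kv.1 + i₁, hc1.1, hc1.2, hbpos _ hpos1⟩
      by_cases hc2 : kv.1 + i₂ ≠ 0 ∧ kv.1 + i₂ ≠ 1
      · exact ⟨kv.1 + i₂, hc2.1, hc2.2, hbpos _ hpos2⟩
      -- both candidate indices are in {0, 1}
      push_neg at hc1 hc2
      by_cases hex3 : ∃ i₃, 0 < Ainf μ i₃ ∧ i₃ ≠ i₁ ∧ i₃ ≠ i₂
      · obtain ⟨i₃, hA3, h31, h32⟩ := hex3
        have hpos3 : 0 < Phi μ₁ 0 (Ainf μ) (kv.1 + i₃) := by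
          refine lt_of_lt_of_le ?_ (hBge i₃)
          rw [hM1', cpow_one]
          exact ENNReal.mul_pos hμkv hA3.ne'
        refine ⟨kv.1 + i₃, ?_, ?_, hbpos _ hpos3⟩ <;> omega
      · -- support of Ainf μ is exactly {i₁, i₂} : all jumps have k.2 ≤ 0, contradiction
        exfalso
        push_neg at hex3
        have hsupp2 : ∀ i, 0 < Ainf μ i → i = i₁ ∨ i = i₂ := by
          intro i hi
          by_contra hc
          push_neg at hc
          exact hc.2 (hex3 i hi hc.1)
        refine exists_up hnn hirr ?_
        intro d hd
        have hd2 : -1 ≤ d.2 := by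
          by_contra hc
          exact absurd (hsupp d (Or.inr (by omega))) (ne_of_gt hd)
        set m : ℤ := ((d.2 + 1).toNat : ℤ) with hmdef
        have hmz : m = d.2 + 1 := by rw [hmdef]; omega
        have he1 := hsupp2 _ (hstep d hd i₁ hA1)
        have he2 := hsupp2 _ (hstep d hd i₂ hA2)
        rw [← hmdef] at he1 he2
        have hD : i₂ - i₁ ≠ 0 := sub_ne_zero.2 (Ne.symm hi12)
        -- from the four cases, m ∈ {0, 1}
        have hm01 : m = 0 ∨ m = 1 := by
          rcases he1 with h1 | h1 <;> rcases he2 with h2 | h2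
          · left
            have : m * (i₂ - i₁) = 0 := by nlinarith [h1, h2]
            exact (mul_eq_zero.1 this).resolve_right hD
          · right
            have : (m - 1) * (i₂ - i₁) = 0 := by nlinarith [h1, h2]
            have := (mul_eq_zero.1 this).resolve_right hD
            omega
          · exfalso
            have : (m + 1) * (i₂ - i₁) = 0 := by nlinarith [h1, h2]
            have := (mul_eq_zero.1 this).resolve_right hD
            omega
          · left
            have : m * (i₂ - i₁) = 0 := by nlinarith [h1, h2]
            exact (mul_eq_zero.1 this).resolve_right hD
        omega
    · -- M = p + 1 with p ≥ 1
      obtain ⟨q, hq⟩ : ∃ q, p = q + 1 := ⟨p - 1, by omega⟩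
      have hca : 0 < cpow (Ainf μ) M ((M : ℤ) * i₁) :=
        lt_of_lt_of_le (ENNReal.pow_pos hA1 M) (pow_le_cpow _ _ _)
      have hcb : 0 < cpow (Ainf μ) M (i₂ + (p : ℤ) * i₁) := by
        rw [hp]
        refine lt_of_lt_of_le ?_ (le_trans (mul_le_mul' (le_refl (Ainf μ i₂)) (pow_le_cpow _ i₁ p))
          (le_cpow_succ _ _ _ _))
        exact ENNReal.mul_pos hA2.ne' (ENNReal.pow_pos hA1 p).ne'
      have hinner : Ainf μ i₂ * (Ainf μ i₂ * (Ainf μ i₁) ^ q)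
          ≤ Ainf μ i₂ * cpow (Ainf μ) p (i₂ + (q : ℤ) * i₁) := by
        refine mul_le_mul' (le_refl _) ?_
        rw [hq]
        exact le_trans (mul_le_mul' (le_refl (Ainf μ i₂)) (pow_le_cpow _ i₁ q))
          (le_cpow_succ _ _ _ _)
      have hcc : 0 < cpow (Ainf μ) M (i₂ + (i₂ + (q : ℤ) * i₁)) := by
        rw [hp]
        exact lt_of_lt_of_le
          (ENNReal.mul_pos hA2.ne' (ENNReal.mul_pos hA2.ne' (ENNReal.pow_pos hA1 q).ne').ne')
          (le_trans hinner (le_cpow_succ _ _ _ _))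
      have hposa : 0 < Phi μ₁ 0 (Ainf μ) (kv.1 + (M : ℤ) * i₁) :=
        lt_of_lt_of_le (ENNReal.mul_pos hμkv hca.ne') (hBge _)
      have hposb : 0 < Phi μ₁ 0 (Ainf μ) (kv.1 + (i₂ + (p : ℤ) * i₁)) :=
        lt_of_lt_of_le (ENNReal.mul_pos hμkv hcb.ne') (hBge _)
      have hposc : 0 < Phi μ₁ 0 (Ainf μ) (kv.1 + (i₂ + (i₂ + (q : ℤ) * i₁))) :=
        lt_of_lt_of_le (ENNReal.mul_pos hμkv hcc.ne') (hBge _)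
      set a := kv.1 + (M : ℤ) * i₁ with hadef
      set bb := kv.1 + (i₂ + (p : ℤ) * i₁) with hbbdef
      set cc := kv.1 + (i₂ + (i₂ + (q : ℤ) * i₁)) with hccdef
      have hMp : (M : ℤ) = (p : ℤ) + 1 := by omega
      have hpq : (p : ℤ) = (q : ℤ) + 1 := by omega
      have hab : bb = a + (i₂ - i₁) := by rw [hadef, hbbdef, hMp]; ring
      have hac : cc = a + 2 * (i₂ - i₁) := by rw [hadef, hccdef, hMp, hpq]; ring
      have hD : i₂ - i₁ ≠ 0 := sub_ne_zero.2 (Ne.symm hi12)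
      have hpick : (a ≠ 0 ∧ a ≠ 1) ∨ (bb ≠ 0 ∧ bb ≠ 1) ∨ (cc ≠ 0 ∧ cc ≠ 1) := by omega
      rcases hpick with h | h | h
      · exact ⟨a, h.1, h.2, hbpos _ hposa⟩
      · exact ⟨bb, h.1, h.2, hbpos _ hposb⟩
      · exact ⟨cc, h.1, h.2, hbpos _ hposc⟩
  · -- the series representation on the whole interval
    intro x hx
    have hxp := hxpos x hx
    have hterm : ∀ j : ℤ, (Phi μ₁ 0 (Ainf μ) j * ep x j).toReal
        = (Phi μ₁ 0 (Ainf μ) j).toReal * x ^ j := by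
      intro j
      rw [ENNReal.toReal_mul]
      congr 1
      exact ENNReal.toReal_ofReal (zpow_nonneg hxp.le j)
    have hEBne : E (Phi μ₁ 0 (Ainf μ)) x ≠ ∞ := by
      rw [hEB x hx]
      exact ENNReal.ofReal_ne_top
    constructor
    · have := ENNReal.summable_toReal hEBne
      exact this.congr hterm
    · have hgnn : 0 ≤ genG μ₁ x (Y₁ x) :=
        tsum_nonneg fun k => mul_nonneg (mul_nonneg (h₁nn k) (zpow_nonneg hxp.le _))
          (zpow_nonneg (hY₁ x hx).1.le _)
      calc genG μ₁ x (Y₁ x) = (ENNReal.ofReal (genG μ₁ x (Y₁ x))).toReal :=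
            (ENNReal.toReal_ofReal hgnn).symm
        _ = (E (Phi μ₁ 0 (Ainf μ)) x).toReal := by rw [hEB x hx]
        _ = ∑' j : ℤ, (Phi μ₁ 0 (Ainf μ) j * ep x j).toReal :=
            ENNReal.tsum_toReal_eq fun j => ENNReal.mul_ne_top (hBfin j) (ep_ne_top x j)
        _ = ∑' j : ℤ, (Phi μ₁ 0 (Ainf μ) j).toReal * x ^ j := tsum_congr hterm


/-! ### Strict convexity and differentiability from nonnegative Laurent series -/

lemma strictConvexOn_of_series {b : ℤ → ℝ} {φ : ℝ → ℝ} {s1 s2 : ℝ} (h0 : 0 < s1)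
    (hbnn : ∀ j, 0 ≤ b j) (hj0 : ∃ j0 : ℤ, j0 ≠ 0 ∧ j0 ≠ 1 ∧ 0 < b j0)
    (hrep : ∀ x ∈ Set.Icc s1 s2, Summable (fun j : ℤ => b j * x ^ j) ∧
      φ x = ∑' j : ℤ, b j * x ^ j) :
    StrictConvexOn ℝ (Set.Icc s1 s2) φ := by
  constructor
  · exact convex_Icc _ _
  intro x hx z hz hxz a c ha hc hac
  simp only [smul_eq_mul]
  have hxp : (x : ℝ) ∈ Set.Ioi (0:ℝ) := lt_of_lt_of_le h0 hx.1
  have hzp : (z : ℝ) ∈ Set.Ioi (0:ℝ) := lt_of_lt_of_le h0 hz.1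
  have hm : a * x + c * z ∈ Set.Icc s1 s2 := by
    have := (convex_Icc s1 s2) hx hz ha.le hc.le hac
    simpa using this
  have hterm : ∀ j : ℤ, b j * (a * x + c * z) ^ j ≤ a * (b j * x ^ j) + c * (b j * z ^ j) := by
    intro j
    have h := (convexOn_zpow j).2 hxp hzp ha.le hc.le hac
    simp only [smul_eq_mul] at h
    calc b j * (a * x + c * z) ^ j ≤ b j * (a * x ^ j + c * z ^ j) :=
          mul_le_mul_of_nonneg_left h (hbnn j)
      _ = a * (b j * x ^ j) + c * (b j * z ^ j) := by ring
  obtain ⟨j0, hj00, hj01, hj0pos⟩ := hj0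
  have hstrict : b j0 * (a * x + c * z) ^ j0 < a * (b j0 * x ^ j0) + c * (b j0 * z ^ j0) := by
    have h := (strictConvexOn_zpow hj00 hj01).2 hxp hzp hxz ha hc hac
    simp only [smul_eq_mul] at h
    calc b j0 * (a * x + c * z) ^ j0 < b j0 * (a * x ^ j0 + c * z ^ j0) :=
          mul_lt_mul_of_pos_left h hj0pos
      _ = a * (b j0 * x ^ j0) + c * (b j0 * z ^ j0) := by ring
  have hsum1 : Summable (fun j : ℤ => b j * (a * x + c * z) ^ j) := (hrep _ hm).1
  have hsumx : Summable (fun j : ℤ => a * (b j * x ^ j)) := (hrep x hx).1.mul_left a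
  have hsumz : Summable (fun j : ℤ => c * (b j * z ^ j)) := (hrep z hz).1.mul_left c
  calc φ (a * x + c * z) = ∑' j : ℤ, b j * (a * x + c * z) ^ j := (hrep _ hm).2
    _ < ∑' j : ℤ, (a * (b j * x ^ j) + c * (b j * z ^ j)) :=
        Summable.tsum_lt_tsum hterm hstrict hsum1 (hsumx.add hsumz)
    _ = a * ∑' j : ℤ, b j * x ^ j + c * ∑' j : ℤ, b j * z ^ j := by
        rw [Summable.tsum_add hsumx hsumz, tsum_mul_left, tsum_mul_left]
    _ = a * φ x + c * φ z := by rw [(hrep x hx).2, (hrep z hz).2]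

lemma zpow_le_zpow_np {u x : ℝ} (hu : 0 < u) (hux : u ≤ x) {n : ℤ} (hn : n ≤ 0) :
    x ^ n ≤ u ^ n := by
  have h1 : u ^ (-n) ≤ x ^ (-n) := zpow_le_zpow_nn hu.le hux (neg_nonneg.2 hn)
  have hupos : 0 < u ^ (-n) := zpow_pos hu _
  have h2 := inv_anti₀ hupos h1
  rwa [← zpow_neg, ← zpow_neg, neg_neg] at h2

lemma hasDerivAt_of_series {b : ℤ → ℝ} {φ : ℝ → ℝ} {s1 s2 x0 : ℝ} (h0 : 0 < s1)
    (hbnn : ∀ j, 0 ≤ b j)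
    (hrep : ∀ x ∈ Set.Icc s1 s2, Summable (fun j : ℤ => b j * x ^ j) ∧
      φ x = ∑' j : ℤ, b j * x ^ j)
    (hx0 : x0 ∈ Set.Ioo s1 s2) :
    HasDerivAt φ (∑' j : ℤ, b j * ((j : ℝ) * x0 ^ (j - 1))) x0 := by
  obtain ⟨hs1x, hxs2⟩ := hx0
  set u₀ : ℝ := (s1 + x0)/2 with hu₀def
  set v₀ : ℝ := (x0 + s2)/2 with hv₀def
  have hs1u : s1 < u₀ := by rw [hu₀def]; linarith
  have hux : u₀ < x0 := by rw [hu₀def]; linarith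
  have hxv : x0 < v₀ := by rw [hv₀def]; linarith
  have hvs2 : v₀ < s2 := by rw [hv₀def]; linarith
  have hu₀pos : 0 < u₀ := lt_trans h0 hs1u
  have hv₀pos : 0 < v₀ := lt_trans hu₀pos (lt_trans hux hxv)
  have hs2pos : 0 < s2 := lt_trans hv₀pos hvs2
  have hS2 : Summable (fun j : ℤ => b j * s2 ^ j) :=
    (hrep s2 ⟨by linarith, le_refl _⟩).1
  have hS1 : Summable (fun j : ℤ => b j * s1 ^ j) :=
    (hrep s1 ⟨le_refl _, by linarith⟩).1
  set qv : ℝ := v₀ / s2 with hqvdef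
  set qu : ℝ := s1 / u₀ with hqudef
  have hqv : ‖qv‖ < 1 := by
    rw [Real.norm_eq_abs, abs_of_pos (div_pos hv₀pos hs2pos)]
    rw [div_lt_one hs2pos]
    exact hvs2
  have hqu : ‖qu‖ < 1 := by
    rw [Real.norm_eq_abs, abs_of_pos (div_pos h0 hu₀pos)]
    rw [div_lt_one hu₀pos]
    exact hs1u
  have hCv : Summable (fun n : ℕ => (n : ℝ) * qv ^ n) := by
    simpa using summable_pow_mul_geometric_of_norm_lt_one 1 hqv
  have hCu : Summable (fun n : ℕ => (n : ℝ) * qu ^ n) := by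
    simpa using summable_pow_mul_geometric_of_norm_lt_one 1 hqu
  set Cv : ℝ := ∑' n : ℕ, (n : ℝ) * qv ^ n with hCvdef
  set Cu : ℝ := ∑' n : ℕ, (n : ℝ) * qu ^ n with hCudef
  have hqvnn : 0 ≤ qv := (div_pos hv₀pos hs2pos).le
  have hqunn : 0 ≤ qu := (div_pos h0 hu₀pos).le
  have hCvterm : ∀ n : ℕ, (n : ℝ) * qv ^ n ≤ Cv := fun n =>
    Summable.le_tsum hCv n fun m _ => mul_nonneg (Nat.cast_nonneg m) (pow_nonneg hqvnn m)
  have hCuterm : ∀ n : ℕ, (n : ℝ) * qu ^ n ≤ Cu := fun n =>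
    Summable.le_tsum hCu n fun m _ => mul_nonneg (Nat.cast_nonneg m) (pow_nonneg hqunn m)
  have hCvnn : 0 ≤ Cv :=
    tsum_nonneg fun m => mul_nonneg (Nat.cast_nonneg m) (pow_nonneg hqvnn m)
  have hCunn : 0 ≤ Cu :=
    tsum_nonneg fun m => mul_nonneg (Nat.cast_nonneg m) (pow_nonneg hqunn m)
  set UU : ℤ → ℝ :=
    fun j => (Cv / v₀) * (b j * s2 ^ j) + (Cu / u₀) * (b j * s1 ^ j) with hUUdef
  have hUsum : Summable UU := (hS2.mul_left _).add (hS1.mul_left _)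
  have hbound : ∀ (j : ℤ), ∀ x ∈ Set.Ioo u₀ v₀, ‖b j * ((j : ℝ) * x ^ (j - 1))‖ ≤ UU j := by
    intro j x hx
    have hxp : 0 < x := lt_trans hu₀pos hx.1
    have habs : ‖b j * ((j : ℝ) * x ^ (j - 1))‖ = b j * (|(j : ℝ)| * x ^ (j - 1)) := by
      rw [Real.norm_eq_abs, abs_mul, abs_of_nonneg (hbnn j), abs_mul,
        abs_of_nonneg (zpow_nonneg hxp.le _)]
    rw [habs]
    have hnn2 : 0 ≤ (Cu / u₀) * (b j * s1 ^ j) :=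
      mul_nonneg (div_nonneg hCunn hu₀pos.le) (mul_nonneg (hbnn j) (zpow_nonneg h0.le j))
    have hnn1 : 0 ≤ (Cv / v₀) * (b j * s2 ^ j) :=
      mul_nonneg (div_nonneg hCvnn hv₀pos.le) (mul_nonneg (hbnn j) (zpow_nonneg hs2pos.le j))
    rcases le_or_gt 1 j with hj | hj
    · -- positive exponents
      set n : ℕ := j.toNat with hndef
      have hn : (n : ℤ) = j := Int.toNat_of_nonneg (by omega)
      have h1 : x ^ (j - 1) ≤ v₀ ^ (j - 1) := zpow_le_zpow_nn hxp.le hx.2.le (by omega)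
      have e3 : |(j : ℝ)| = (n : ℝ) := by
        rw [abs_of_nonneg (by exact_mod_cast (by omega : (0:ℤ) ≤ j))]
        exact_mod_cast congrArg (Int.cast : ℤ → ℝ) hn.symm
      have e1 : v₀ ^ (j - 1) = v₀ ^ j / v₀ := by
        rw [zpow_sub_one₀ hv₀pos.ne', div_eq_mul_inv]
      have e2 : v₀ ^ j = qv ^ n * s2 ^ j := by
        have hv : v₀ = qv * s2 := by rw [hqvdef]; field_simp
        rw [← hn, zpow_natCast, zpow_natCast, hv, mul_pow]
      have key : |(j : ℝ)| * v₀ ^ (j - 1) ≤ Cv / v₀ * s2 ^ j := by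
        rw [e3, e1, e2]
        have h5 : (n : ℝ) * qv ^ n ≤ Cv := hCvterm n
        have h6 : 0 < s2 ^ j := zpow_pos hs2pos j
        rw [div_eq_mul_inv, div_eq_mul_inv]
        calc (n : ℝ) * (qv ^ n * s2 ^ j * v₀⁻¹) = ((n : ℝ) * qv ^ n) * (s2 ^ j * v₀⁻¹) := by ring
          _ ≤ Cv * (s2 ^ j * v₀⁻¹) :=
              mul_le_mul_of_nonneg_right h5
                (mul_nonneg h6.le (inv_nonneg.2 hv₀pos.le))
          _ = Cv * v₀⁻¹ * s2 ^ j := by ring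
      calc b j * (|(j : ℝ)| * x ^ (j - 1))
          ≤ b j * (|(j : ℝ)| * v₀ ^ (j - 1)) :=
            mul_le_mul_of_nonneg_left
              (mul_le_mul_of_nonneg_left h1 (abs_nonneg _)) (hbnn j)
        _ ≤ b j * (Cv / v₀ * s2 ^ j) := mul_le_mul_of_nonneg_left key (hbnn j)
        _ = (Cv / v₀) * (b j * s2 ^ j) := by ring
        _ ≤ UU j := le_add_of_nonneg_right hnn2
    · -- nonpositive exponents
      have hj' : j ≤ 0 := by omega
      set n : ℕ := (-j).toNat with hndef
      have hn : (n : ℤ) = -j := Int.toNat_of_nonneg (by omega)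
      have h1 : x ^ (j - 1) ≤ u₀ ^ (j - 1) := zpow_le_zpow_np hu₀pos hx.1.le (by omega)
      have e3 : |(j : ℝ)| = (n : ℝ) := by
        rw [abs_of_nonpos (by exact_mod_cast hj' : (j:ℝ) ≤ 0)]
        have : ((n : ℤ) : ℝ) = ((-j : ℤ) : ℝ) := by exact_mod_cast congrArg (Int.cast : ℤ → ℝ) hn
        push_cast at this ⊢
        linarith
      have e1 : u₀ ^ (j - 1) = u₀ ^ j / u₀ := by
        rw [zpow_sub_one₀ hu₀pos.ne', div_eq_mul_inv]
      have e2 : u₀ ^ j = qu ^ n * s1 ^ j := by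
        have hj2 : j = -(n : ℤ) := by omega
        have hs1ne : s1 ≠ 0 := h0.ne'
        have hu₀ne : u₀ ≠ 0 := hu₀pos.ne'
        have hquneq : qu ≠ 0 := by rw [hqudef]; exact div_ne_zero hs1ne hu₀ne
        have hu₀eq : u₀ = qu⁻¹ * s1 := by rw [hqudef]; field_simp
        rw [hu₀eq, mul_zpow, inv_zpow, ← zpow_neg, ← hn, zpow_natCast]
      have key : |(j : ℝ)| * u₀ ^ (j - 1) ≤ Cu / u₀ * s1 ^ j := by
        rw [e3, e1, e2]
        have h5 : (n : ℝ) * qu ^ n ≤ Cu := hCuterm n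
        have h6 : 0 < s1 ^ j := zpow_pos h0 j
        calc (n : ℝ) * (qu ^ n * s1 ^ j / u₀) = ((n : ℝ) * qu ^ n) * (s1 ^ j / u₀) := by ring
          _ ≤ Cu * (s1 ^ j / u₀) :=
              mul_le_mul_of_nonneg_right h5 (div_nonneg h6.le hu₀pos.le)
          _ = Cu / u₀ * s1 ^ j := by ring
      calc b j * (|(j : ℝ)| * x ^ (j - 1))
          ≤ b j * (|(j : ℝ)| * u₀ ^ (j - 1)) :=
            mul_le_mul_of_nonneg_left
              (mul_le_mul_of_nonneg_left h1 (abs_nonneg _)) (hbnn j)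
        _ ≤ b j * (Cu / u₀ * s1 ^ j) := mul_le_mul_of_nonneg_left key (hbnn j)
        _ = (Cu / u₀) * (b j * s1 ^ j) := by ring
        _ ≤ UU j := le_add_of_nonneg_left hnn1
  have hder : ∀ (t : Finset ℤ), ∀ x ∈ Set.Ioo u₀ v₀,
      HasDerivAt (fun y => ∑ j ∈ t, b j * y ^ j) (∑ j ∈ t, b j * ((j : ℝ) * x ^ (j - 1))) x := by
    intro t x hx
    have hxp : 0 < x := lt_trans hu₀pos hx.1
    exact HasDerivAt.fun_sum fun j _ => (hasDerivAt_zpow j x (Or.inl hxp.ne')).const_mul (b j)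
  have huni : TendstoUniformlyOn
      (fun (t : Finset ℤ) x => ∑ j ∈ t, b j * ((j : ℝ) * x ^ (j - 1)))
      (fun x => ∑' j : ℤ, b j * ((j : ℝ) * x ^ (j - 1))) atTop (Set.Ioo u₀ v₀) :=
    tendstoUniformlyOn_tsum hUsum hbound
  have hmem : ∀ x ∈ Set.Ioo u₀ v₀, x ∈ Set.Icc s1 s2 := fun x hx =>
    ⟨le_trans hs1u.le hx.1.le, le_trans hx.2.le hvs2.le⟩
  have hptw : ∀ x ∈ Set.Ioo u₀ v₀,
      Tendsto (fun t : Finset ℤ => ∑ j ∈ t, b j * x ^ j) atTop (𝓝 (φ x)) := by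
    intro x hx
    have h := hrep x (hmem x hx)
    rw [h.2]
    exact h.1.hasSum
  exact hasDerivAt_of_tendstoUniformlyOn isOpen_Ioo huni (Eventually.of_forall hder) hptw
    ⟨hux, hxv⟩

end PhiAux

set_option maxHeartbeats 1000000 in
/-- The function `x ↦ φ₁(x, Y₁(x))` is strictly convex on `[x*_P, x**_P]`, and when
`x** < x**_P`: (a) its value at `x**` is `1`; (b) it is `< 1` on `(x*, x**)`;
(c) its derivative at `x**` is strictly positive (so `x**` is a simple zero of
`1 − φ₁(·, Y₁(·))`). -/
theorem phi1_Y1_strictly_convex_and_simple_zero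
    (μ μ₁ : ℤ × ℤ → ℝ)
    (hnn : ∀ k, 0 ≤ μ k) (hprob : ∑' k : ℤ × ℤ, μ k = 1)
    (h₁nn : ∀ k, 0 ≤ μ₁ k) (h₁mass : ∑' k : ℤ × ℤ, μ₁ k ≤ 1)
    (hsupp : ∀ k : ℤ × ℤ, k.1 < -1 ∨ k.2 < -1 → μ k = 0)
    (h₁supp : ∀ k : ℤ × ℤ, k.1 < -1 ∨ k.2 < 0 → μ₁ k = 0)
    (h₁vert : ∃ k : ℤ × ℤ, 0 < k.2 ∧ 0 < μ₁ k)
    (hirr : ∀ j k : ℤ × ℤ, ∃ n, 0 < iterK (homK μ) n j k)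
    (hcpt : IsCompact {q : ℝ × ℝ | 0 < q.1 ∧ 0 < q.2 ∧ genG μ q.1 q.2 ≤ 1})
    (hint : (interior {q : ℝ × ℝ | 0 < q.1 ∧ 0 < q.2 ∧ genG μ q.1 q.2 ≤ 1}).Nonempty)
    (hfin : ∃ U : Set (ℝ × ℝ), IsOpen U ∧
      {q : ℝ × ℝ | 0 < q.1 ∧ 0 < q.2 ∧ genG μ q.1 q.2 ≤ 1} ⊆ U ∧
      ∀ q ∈ U, Summable (fun k : ℤ × ℤ => μ k * q.1 ^ k.1 * q.2 ^ k.2) ∧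
        Summable (fun k : ℤ × ℤ => μ₁ k * q.1 ^ k.1 * q.2 ^ k.2))
    (hintDD₁ : (interior {q : ℝ × ℝ | 0 < q.1 ∧ 0 < q.2 ∧ genG μ q.1 q.2 ≤ 1 ∧
      genG μ₁ q.1 q.2 ≤ 1}).Nonempty)
    (xsP xssP xst xsst : ℝ)
    (hproj : {x : ℝ | 0 < x ∧ ∃ y : ℝ, 0 < y ∧ genG μ x y ≤ 1} = Set.Icc xsP xssP)
    (h₁proj : {x : ℝ | 0 < x ∧ ∃ y : ℝ, 0 < y ∧ genG μ x y ≤ 1 ∧ genG μ₁ x y ≤ 1} =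
      Set.Icc xst xsst)
    (hchain : xsP ≤ xst ∧ xst < xsst ∧ xsst ≤ xssP)
    (Y₁ : ℝ → ℝ)
    (hY₁ : ∀ x ∈ Set.Icc xsP xssP, 0 < Y₁ x ∧ genG μ x (Y₁ x) = 1 ∧
      ∀ y : ℝ, 0 < y → genG μ x y = 1 → Y₁ x ≤ y) :
    StrictConvexOn ℝ (Set.Icc xsP xssP) (fun x => genG μ₁ x (Y₁ x)) ∧
    (xsst < xssP →
      genG μ₁ xsst (Y₁ xsst) = 1 ∧
      (∀ x ∈ Set.Ioo xst xsst, genG μ₁ x (Y₁ x) < 1) ∧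
      ∃ c : ℝ, 0 < c ∧ HasDerivAt (fun x => genG μ₁ x (Y₁ x)) c xsst) := by
  obtain ⟨hchain1, hchain2, hchain3⟩ := hchain
  have hne : xsP ≤ xssP := by linarith
  obtain ⟨b, hbnn, hj0, hrep⟩ :=
    PhiAux.main_series hnn h₁nn hsupp h₁supp h₁vert hirr hfin hproj hne hY₁
  have hxpos : ∀ x ∈ Set.Icc xsP xssP, 0 < x := by
    intro x hx
    rw [← hproj] at hx
    exact hx.1
  have hxsPpos : 0 < xsP := hxpos xsP ⟨le_refl _, hne⟩
  have hSC : StrictConvexOn ℝ (Set.Icc xsP xssP) (fun x => genG μ₁ x (Y₁ x)) :=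
    PhiAux.strictConvexOn_of_series hxsPpos hbnn hj0 hrep
  refine ⟨hSC, fun hlt => ?_⟩
  obtain ⟨U, hUo, hDU, hUsum⟩ := hfin
  have hIccsub : Set.Icc xst xsst ⊆ Set.Icc xsP xssP := fun x hx =>
    ⟨le_trans hchain1 hx.1, le_trans hx.2 hchain3⟩
  have hYmin : ∀ x ∈ Set.Icc xsP xssP, ∀ y : ℝ, 0 < y → genG μ x y ≤ 1 → Y₁ x ≤ y := by
    intro x hx y hy hgy
    have hx0 := hxpos x hx
    have hmem1 : ((x, Y₁ x) : ℝ × ℝ) ∈ {q : ℝ × ℝ | 0 < q.1 ∧ 0 < q.2 ∧ genG μ q.1 q.2 ≤ 1} :=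
      ⟨hx0, (hY₁ x hx).1, le_of_eq (hY₁ x hx).2.1⟩
    have hmem2 : ((x, y) : ℝ × ℝ) ∈ {q : ℝ × ℝ | 0 < q.1 ∧ 0 < q.2 ∧ genG μ q.1 q.2 ≤ 1} :=
      ⟨hx0, hy, hgy⟩
    have hEA : PhiAux.E (PhiAux.Ainf μ) x = ENNReal.ofReal (Y₁ x) :=
      PhiAux.key2 hnn hsupp hirr hx0 (hY₁ x hx).1
        (hUsum _ (hDU hmem1)).1
        (hY₁ x hx).2.1 (hY₁ x hx).2.2
    have hsumxy := (hUsum _ (hDU hmem2)).1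
    have hkey := PhiAux.key1 hnn hsupp hx0 hy hsumxy hgy
    rw [hEA] at hkey
    exact (ENNReal.ofReal_le_ofReal_iff hy.le).1 hkey
  have hφle : ∀ x ∈ Set.Icc xst xsst, genG μ₁ x (Y₁ x) ≤ 1 := by
    intro x hx
    have hx' : x ∈ Set.Icc xsP xssP := hIccsub hx
    have hx0 := hxpos x hx'
    have hxset : x ∈ {x : ℝ | 0 < x ∧ ∃ y : ℝ, 0 < y ∧ genG μ x y ≤ 1 ∧ genG μ₁ x y ≤ 1} := by
      rw [h₁proj]; exact hx
    obtain ⟨-, y, hy0, hgy, hg1y⟩ := hxset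
    have hYle : Y₁ x ≤ y := hYmin x hx' y hy0 hgy
    have hmem1 : ((x, y) : ℝ × ℝ) ∈ {q : ℝ × ℝ | 0 < q.1 ∧ 0 < q.2 ∧ genG μ q.1 q.2 ≤ 1} :=
      ⟨hx0, hy0, hgy⟩
    have hmem2 : ((x, Y₁ x) : ℝ × ℝ) ∈ {q : ℝ × ℝ | 0 < q.1 ∧ 0 < q.2 ∧ genG μ q.1 q.2 ≤ 1} :=
      ⟨hx0, (hY₁ x hx').1, le_of_eq (hY₁ x hx').2.1⟩
    have hsum_y : Summable (fun k : ℤ × ℤ => μ₁ k * x ^ k.1 * y ^ k.2) :=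
      (hUsum _ (hDU hmem1)).2
    have hsum_Y : Summable (fun k : ℤ × ℤ => μ₁ k * x ^ k.1 * (Y₁ x) ^ k.2) :=
      (hUsum _ (hDU hmem2)).2
    have hmono : genG μ₁ x (Y₁ x) ≤ genG μ₁ x y := by
      refine Summable.tsum_le_tsum (fun k => ?_) hsum_Y hsum_y
      by_cases hk : μ₁ k = 0
      · simp [hk]
      · have hk2 : 0 ≤ k.2 := by
          by_contra hc
          exact hk (h₁supp k (Or.inr (by omega)))
        exact mul_le_mul_of_nonneg_left (PhiAux.zpow_le_zpow_nn (hY₁ x hx').1.le hYle hk2)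
          (mul_nonneg (h₁nn k) (zpow_nonneg hx0.le _))
    exact le_trans hmono hg1y
  have hgt : ∀ x ∈ Set.Icc xsP xssP, genG μ₁ x (Y₁ x) ≤ 1 → x ≤ xsst := by
    intro x hx hle
    have : x ∈ Set.Icc xst xsst := by
      rw [← h₁proj]
      exact ⟨hxpos x hx, Y₁ x, (hY₁ x hx).1, le_of_eq (hY₁ x hx).2.1, hle⟩
    exact this.2
  have hxsstI : xsst ∈ Set.Ioo xsP xssP := ⟨lt_of_le_of_lt hchain1 hchain2, hlt⟩
  have hxsstIcc : xsst ∈ Set.Icc xsP xssP := ⟨hxsstI.1.le, hxsstI.2.le⟩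
  have hDer := PhiAux.hasDerivAt_of_series hxsPpos hbnn hrep hxsstI
  set c : ℝ := ∑' j : ℤ, b j * ((j : ℝ) * xsst ^ (j - 1)) with hcdef
  -- part (a)
  have hφxsst_le : genG μ₁ xsst (Y₁ xsst) ≤ 1 := hφle xsst ⟨hchain2.le, le_refl _⟩
  have ha : genG μ₁ xsst (Y₁ xsst) = 1 := by
    rcases lt_or_eq_of_le hφxsst_le with hlt1 | heq
    · exfalso
      have hcont : ContinuousAt (fun x => genG μ₁ x (Y₁ x)) xsst := hDer.continuousAt
      have hevt : ∀ᶠ x in 𝓝 xsst, genG μ₁ x (Y₁ x) < 1 := hcont.eventually_lt_const hlt1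
      have hevt' : ∀ᶠ x in 𝓝[>] xsst, genG μ₁ x (Y₁ x) < 1 :=
        hevt.filter_mono nhdsWithin_le_nhds
      have hIoo : Set.Ioo xsst xssP ∈ 𝓝[>] xsst := Ioo_mem_nhdsGT hlt
      obtain ⟨x, h1, h2⟩ := (hevt'.and (eventually_of_mem hIoo (fun x hx => hx))).exists
      have hxIcc : x ∈ Set.Icc xsP xssP := ⟨by linarith [hxsstI.1, h2.1], h2.2.le⟩
      have := hgt x hxIcc h1.le
      linarith [h2.1]
    · exact heq
  -- part (b)
  have hbpart : ∀ x ∈ Set.Ioo xst xsst, genG μ₁ x (Y₁ x) < 1 := by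
    intro x hx
    set a : ℝ := (xsst - x) / (xsst - xst) with hadef
    have ha0 : 0 < a := div_pos (by linarith [hx.2]) (by linarith)
    have ha1 : a < 1 := by
      rw [hadef, div_lt_one (by linarith)]
      linarith [hx.1]
    have hsum1 : a + (1 - a) = 1 := by ring
    have hd : xsst - xst ≠ 0 := ne_of_gt (by linarith)
    have h5 : a * (xsst - xst) = xsst - x := by
      rw [hadef, div_mul_eq_mul_div, mul_div_assoc, div_self hd, mul_one]
    have hcomb : a * xst + (1 - a) * xsst = x := by linear_combination -h5
    have hxstI : xst ∈ Set.Icc xsP xssP := ⟨hchain1, by linarith⟩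
    have hstr := hSC.2 hxstI hxsstIcc (ne_of_lt hchain2) ha0 (by linarith) hsum1
    simp only [smul_eq_mul] at hstr
    rw [hcomb] at hstr
    calc genG μ₁ x (Y₁ x)
        < a * genG μ₁ xst (Y₁ xst) + (1 - a) * genG μ₁ xsst (Y₁ xsst) := hstr
      _ ≤ a * 1 + (1 - a) * 1 := by
          have h1 := hφle xst ⟨le_refl _, hchain2.le⟩
          rw [ha]
          nlinarith
      _ = 1 := by ring
  refine ⟨ha, hbpart, c, ?_, hDer⟩
  -- positivity of the derivative
  set xL : ℝ := (xst + xsst) / 2 with hxLdef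
  have hxLmem : xL ∈ Set.Ioo xst xsst := ⟨by rw [hxLdef]; linarith, by rw [hxLdef]; linarith⟩
  have hφL := hbpart xL hxLmem
  have hxLIcc : xL ∈ Set.Icc xsP xssP := hIccsub ⟨hxLmem.1.le, hxLmem.2.le⟩
  have hs₀ : 0 < (1 - genG μ₁ xL (Y₁ xL)) / (xsst - xL) :=
    div_pos (by linarith) (by linarith [hxLmem.2])
  have hconv := hSC.convexOn
  have htend : Filter.Tendsto (slope (fun x => genG μ₁ x (Y₁ x)) xsst) (𝓝[>] xsst) (𝓝 c) :=
    (hasDerivAt_iff_tendsto_slope.1 hDer).mono_left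
      (nhdsWithin_mono _ (fun y hy => Set.mem_compl_singleton_iff.2 (ne_of_gt hy)))
  have hc_ge : (1 - genG μ₁ xL (Y₁ xL)) / (xsst - xL) ≤ c := by
    refine ge_of_tendsto htend ?_
    filter_upwards [Ioo_mem_nhdsGT hlt] with y hy
    have hyIcc : y ∈ Set.Icc xsP xssP := ⟨by linarith [hxsstI.1, hy.1], hy.2.le⟩
    have hmono := hconv.slope_mono_adjacent hxLIcc hyIcc hxLmem.2 hy.1
    rw [ha] at hmono
    rw [slope_def_field, ha]
    exact hmono
  exact lt_of_lt_of_le hs₀ hc_ge
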